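/- Let (Ω, F, P) be a probability space, A ∈ F an event, c₁, c₂ ≥ 0 real constants, and X, Y, X̂, Ŷ : Ω → ℝ random variables such that |X| ≤ c₁, |X̂| ≤ c₁, |Y| ≤ c₂, |Ŷ| ≤ c₂ almost surely, X̂ and Ŷ are independent, X has the same distribution as X̂, Y has the same distribution as Ŷ, and on the complement of A one has X = X̂ and Y = Ŷ pointwise. Then |E[X·Y] − E[X]·E[Y]| ≤ 2 c₁ c₂ P(A). -/

import Mathlib

open MeasureTheory ProbabilityTheory

/-- Decoupling by coupling: if `X, Y` agree off an event `A` with an independent pair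
`X̂, Ŷ` having the same marginal distributions, and all four variables are bounded by
`c₁` resp. `c₂`, then `|E[XY] − E[X]E[Y]| ≤ 2 c₁ c₂ P(A)`. -/
theorem abs_cov_le_of_coupling
    {Ω : Type*} [MeasurableSpace Ω] (μ : Measure Ω) [IsProbabilityMeasure μ]
    (A : Set Ω) (hA : MeasurableSet A)
    (c₁ c₂ : ℝ) (hc₁ : 0 ≤ c₁) (hc₂ : 0 ≤ c₂)
    (X Y Xhat Yhat : Ω → ℝ)
    (hX : Measurable X) (hY : Measurable Y)
    (hXhat : Measurable Xhat) (hYhat : Measurable Yhat)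
    (hXb : ∀ᵐ ω ∂μ, |X ω| ≤ c₁) (hXhatb : ∀ᵐ ω ∂μ, |Xhat ω| ≤ c₁)
    (hYb : ∀ᵐ ω ∂μ, |Y ω| ≤ c₂) (hYhatb : ∀ᵐ ω ∂μ, |Yhat ω| ≤ c₂)
    (hindep : IndepFun Xhat Yhat μ)
    (hXd : IdentDistrib X Xhat μ μ) (hYd : IdentDistrib Y Yhat μ μ)
    (hcoupling : ∀ ω ∉ A, X ω = Xhat ω ∧ Y ω = Yhat ω) :
    |μ[fun ω => X ω * Y ω] - μ[X] * μ[Y]| ≤ 2 * c₁ * c₂ * (μ A).toReal := by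
  have hintX : Integrable X μ :=
    ⟨hX.aestronglyMeasurable, HasFiniteIntegral.of_bounded (C := c₁)
      (hXb.mono fun ω h => by simpa using h)⟩
  have hintY : Integrable Y μ :=
    ⟨hY.aestronglyMeasurable, HasFiniteIntegral.of_bounded (C := c₂)
      (hYb.mono fun ω h => by simpa using h)⟩
  have hintXh : Integrable Xhat μ :=
    ⟨hXhat.aestronglyMeasurable, HasFiniteIntegral.of_bounded (C := c₁)
      (hXhatb.mono fun ω h => by simpa using h)⟩
  have hintYh : Integrable Yhat μ :=
    ⟨hYhat.aestronglyMeasurable, HasFiniteIntegral.of_bounded (C := c₂)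
      (hYhatb.mono fun ω h => by simpa using h)⟩
  have hintXY : Integrable (fun ω => X ω * Y ω) μ :=
    ⟨(hX.mul hY).aestronglyMeasurable, HasFiniteIntegral.of_bounded (C := c₁ * c₂)
      ((hXb.and hYb).mono fun ω ⟨h1, h2⟩ => by
        simp only [Real.norm_eq_abs, abs_mul]
        exact mul_le_mul h1 h2 (abs_nonneg _) hc₁)⟩
  have hintXYh : Integrable (fun ω => Xhat ω * Yhat ω) μ :=
    ⟨(hXhat.mul hYhat).aestronglyMeasurable, HasFiniteIntegral.of_bounded (C := c₁ * c₂)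
      ((hXhatb.and hYhatb).mono fun ω ⟨h1, h2⟩ => by
        simp only [Real.norm_eq_abs, abs_mul]
        exact mul_le_mul h1 h2 (abs_nonneg _) hc₁)⟩
  have hEX : μ[X] = μ[Xhat] := hXd.integral_eq
  have hEY : μ[Y] = μ[Yhat] := hYd.integral_eq
  have hmul : μ[fun ω => Xhat ω * Yhat ω] = μ[Xhat] * μ[Yhat] :=
    hindep.integral_mul_eq_mul_integral hXhat.aestronglyMeasurable hYhat.aestronglyMeasurable
  have key : μ[fun ω => X ω * Y ω] - μ[X] * μ[Y]
      = ∫ ω, (X ω * Y ω - Xhat ω * Yhat ω) ∂μ := by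
    rw [integral_sub hintXY hintXYh, hmul, hEX, hEY]
  rw [key]
  calc |∫ ω, (X ω * Y ω - Xhat ω * Yhat ω) ∂μ|
      ≤ ∫ ω, |X ω * Y ω - Xhat ω * Yhat ω| ∂μ := by simpa [Real.norm_eq_abs] using norm_integral_le_integral_norm (fun ω => X ω * Y ω - Xhat ω * Yhat ω)
    _ ≤ ∫ ω, A.indicator (fun _ => 2 * c₁ * c₂) ω ∂μ := by
        refine integral_mono_ae (hintXY.sub hintXYh).abs
          ((integrable_const (2 * c₁ * c₂)).indicator hA) ?_
        filter_upwards [hXb, hYb, hXhatb, hYhatb] with ω h1 h2 h3 h4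
        by_cases hω : ω ∈ A
        · simp only [Set.indicator_of_mem hω]
          calc |X ω * Y ω - Xhat ω * Yhat ω|
              ≤ |X ω * Y ω| + |Xhat ω * Yhat ω| := abs_sub _ _
            _ ≤ c₁ * c₂ + c₁ * c₂ := by
                rw [abs_mul, abs_mul]
                exact add_le_add (mul_le_mul h1 h2 (abs_nonneg _) hc₁)
                  (mul_le_mul h3 h4 (abs_nonneg _) hc₁)
            _ = 2 * c₁ * c₂ := by ring
        · obtain ⟨e1, e2⟩ := hcoupling ω hω
          simp [Set.indicator_of_notMem hω, e1, e2]
    _ = 2 * c₁ * c₂ * (μ A).toReal := by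
        rw [integral_indicator_const _ hA, smul_eq_mul, measureReal_def]; ring
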